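/- arXiv:1608.06395 — 3 statements merged into one kernel-verified Lean document; each statement's English description precedes it below -/
import Mathlib

section
/- If (λ₁, λ₂) ∈ (k^×)² satisfies at least two of the five Shapovalov conditions, then both λ₁ and λ₂ are 12th roots of unity. -/
/-- At least two of five propositions hold. -/
def TwoOfFive (P1 P2 P3 P4 P5 : Prop) : Prop :=
  (P1 ∧ P2) ∨ (P1 ∧ P3) ∨ (P1 ∧ P4) ∨ (P1 ∧ P5) ∨ (P2 ∧ P3) ∨
  (P2 ∧ P4) ∨ (P2 ∧ P5) ∨ (P3 ∧ P4) ∨ (P3 ∧ P5) ∨ (P4 ∧ P5)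

private lemma dvd12aux {k : Type*} [Field k] {x : k} {n c m : ℕ} (hn : n * c = m)
    (h : x ^ n = 1) : x ^ m = 1 := by
  rw [← hn, pow_mul, h, one_pow]

theorem stmt_5 {k : Type*} [Field k] [IsAlgClosed k] [CharZero k]
    (ζ : k) (hζ : IsPrimitiveRoot ζ 12)
    (lam1 lam2 : k) (hlam1 : lam1 ≠ 0) (hlam2 : lam2 ≠ 0)
    (h : TwoOfFive (lam1 ∈ ({1, ζ ^ 8} : Set k))
      (lam1 ^ 2 * lam2 ∈ ({-1, ζ ^ 10} : Set k))
      (lam1 ^ 3 * lam2 ^ 2 = -1)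
      (lam1 * lam2 ∈ ({ζ, ζ ^ 4, ζ ^ 7} : Set k))
      (lam2 = 1)) :
    lam1 ^ 12 = 1 ∧ lam2 ^ 12 = 1 := by
  have h12 : ζ ^ 12 = 1 := hζ.pow_eq_one
  have E1 : lam1 ∈ ({1, ζ ^ 8} : Set k) → lam1 ^ 3 = 1 := by
    rintro (rfl | h1)
    · ring
    · rw [h1]; linear_combination (ζ ^ 12 + 1) * h12
  have E2 : lam1 ^ 2 * lam2 ∈ ({-1, ζ ^ 10} : Set k) → lam1 ^ 12 * lam2 ^ 6 = 1 := by
    rintro (h2 | h2)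
    · have : lam1 ^ 12 * lam2 ^ 6 = (lam1 ^ 2 * lam2) ^ 6 := by ring
      rw [this, h2]; ring
    · have : lam1 ^ 12 * lam2 ^ 6 = (lam1 ^ 2 * lam2) ^ 6 := by ring
      rw [this, h2]
      linear_combination (ζ ^ 48 + ζ ^ 36 + ζ ^ 24 + ζ ^ 12 + 1) * h12
  have E3 : lam1 ^ 3 * lam2 ^ 2 = -1 → lam1 ^ 6 * lam2 ^ 4 = 1 := by
    intro h3
    have : lam1 ^ 6 * lam2 ^ 4 = (lam1 ^ 3 * lam2 ^ 2) ^ 2 := by ring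
    rw [this, h3]; ring
  have E4 : lam1 * lam2 ∈ ({ζ, ζ ^ 4, ζ ^ 7} : Set k) → lam1 ^ 12 * lam2 ^ 12 = 1 := by
    have key : lam1 ^ 12 * lam2 ^ 12 = (lam1 * lam2) ^ 12 := by ring
    rintro (h4 | h4 | h4) <;> rw [key, h4]
    · exact h12
    · linear_combination (ζ ^ 36 + ζ ^ 24 + ζ ^ 12 + 1) * h12
    · linear_combination (ζ ^ 72 + ζ ^ 60 + ζ ^ 48 + ζ ^ 36 + ζ ^ 24 + ζ ^ 12 + 1) * h12
  rcases h with ⟨h1, h2⟩ | ⟨h1, h3⟩ | ⟨h1, h4⟩ | ⟨h1, h5⟩ | ⟨h2, h3⟩ |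
    ⟨h2, h4⟩ | ⟨h2, h5⟩ | ⟨h3, h4⟩ | ⟨h3, h5⟩ | ⟨h4, h5⟩
  · -- C1 C2
    have f1 := E1 h1; have f2 := E2 h2
    have g1 : lam1 ^ 12 = 1 := dvd12aux (by norm_num : 3 * 4 = 12) f1
    have g2 : lam2 ^ 6 = 1 := by linear_combination f2 - lam2 ^ 6 * g1
    exact ⟨g1, dvd12aux (by norm_num : 6 * 2 = 12) g2⟩
  · -- C1 C3
    have f1 := E1 h1; have f3 := E3 h3
    have g1 : lam1 ^ 6 = 1 := dvd12aux (by norm_num : 3 * 2 = 6) f1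
    have g2 : lam2 ^ 4 = 1 := by linear_combination f3 - lam2 ^ 4 * g1
    exact ⟨dvd12aux (by norm_num : 3 * 4 = 12) f1,
      dvd12aux (by norm_num : 4 * 3 = 12) g2⟩
  · -- C1 C4
    have f1 := E1 h1; have f4 := E4 h4
    have g1 : lam1 ^ 12 = 1 := dvd12aux (by norm_num : 3 * 4 = 12) f1
    exact ⟨g1, by linear_combination f4 - lam2 ^ 12 * g1⟩
  · -- C1 C5
    subst h5
    exact ⟨dvd12aux (by norm_num : 3 * 4 = 12) (E1 h1), by ring⟩
  · -- C2 C3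
    have f2 := E2 h2; have f3 := E3 h3
    have g2 : lam2 ^ 2 = 1 := by
      linear_combination (lam1 ^ 6 * lam2 ^ 4 + 1) * f3 - lam2 ^ 2 * f2
    have g6 : lam2 ^ 6 = 1 := dvd12aux (by norm_num : 2 * 3 = 6) g2
    have g1 : lam1 ^ 12 = 1 := by linear_combination f2 - lam1 ^ 12 * g6
    exact ⟨g1, dvd12aux (by norm_num : 2 * 6 = 12) g2⟩
  · -- C2 C4
    have f2 := E2 h2; have f4 := E4 h4
    have g6 : lam2 ^ 6 = 1 := by linear_combination f4 - lam2 ^ 6 * f2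
    have g1 : lam1 ^ 12 = 1 := by linear_combination f2 - lam1 ^ 12 * g6
    exact ⟨g1, dvd12aux (by norm_num : 6 * 2 = 12) g6⟩
  · -- C2 C5
    subst h5
    have f2 := E2 h2
    exact ⟨by linear_combination f2, by ring⟩
  · -- C3 C4
    have f3 := E3 h3; have f4 := E4 h4
    have g1 : lam1 ^ 6 = 1 := by
      linear_combination (lam1 ^ 12 * lam2 ^ 8 + lam1 ^ 6 * lam2 ^ 4 + 1) * f3 -
        lam1 ^ 6 * f4
    have g2 : lam2 ^ 4 = 1 := by linear_combination f3 - lam2 ^ 4 * g1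
    exact ⟨dvd12aux (by norm_num : 6 * 2 = 12) g1,
      dvd12aux (by norm_num : 4 * 3 = 12) g2⟩
  · -- C3 C5
    subst h5
    have f3 := E3 h3
    exact ⟨dvd12aux (by norm_num : 6 * 2 = 12) (by linear_combination f3), by ring⟩
  · -- C4 C5
    subst h5
    have f4 := E4 h4
    exact ⟨by linear_combination f4, by ring⟩
end

section
/- There are exactly 37 pairs (λ₁, λ₂) of 12th roots of unity satisfying at least two of the five Shapovalov conditions, and they are exactly the pairs listed as the families 𝕀₁₁ through 𝕀₄₇ in the paper (e.g. (1,ζ), (1,ζ^4), (1,ζ^7), (1,ζ^3), (1,ζ^9), (1,-1), (1,ζ^{10}), (ζ^8,ζ^5), (ζ^8,ζ^8), (ζ^8,ζ^{11}), (ζ^8,ζ^3), (ζ^8,ζ^9), (ζ^8,ζ^2), (ζ^8,-1), (ζ^{11},ζ^8), (ζ^5,ζ^8), (ζ^4,ζ^9), (ζ^9,ζ^4), (-1,-1), (ζ^2,ζ^2), (-1,ζ^{10}), (ζ^{10},-1), (ζ^2,-1), (ζ^4,ζ^3), (ζ^3,ζ^4), and (ζ^j, 1) for j = 1,…,11, and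 (1,1)). -/
/-- The exponent-level condition in `ZMod 12`. -/
def Q12 (i j : ZMod 12) : Prop :=
  TwoOfFive (i = 0 ∨ i = 8) (2 * i + j = 6 ∨ 2 * i + j = 10) (3 * i + 2 * j = 6)
    (i + j = 1 ∨ i + j = 4 ∨ i + j = 7) (j = 0)

instance (i j : ZMod 12) : Decidable (Q12 i j) := by
  unfold Q12 TwoOfFive; infer_instance

theorem twoOfFive_congr {P1 P2 P3 P4 P5 Q1 Q2 Q3 Q4 Q5 : Prop}
    (h1 : P1 ↔ Q1) (h2 : P2 ↔ Q2) (h3 : P3 ↔ Q3) (h4 : P4 ↔ Q4) (h5 : P5 ↔ Q5) :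
    TwoOfFive P1 P2 P3 P4 P5 ↔ TwoOfFive Q1 Q2 Q3 Q4 Q5 := by
  unfold TwoOfFive; rw [h1, h2, h3, h4, h5]

set_option maxHeartbeats 4000000 in
theorem stmt6_aux {k : Type*} [Field k] [IsAlgClosed k] [CharZero k]
    (ζ : k) (hζ : IsPrimitiveRoot ζ 12) :
    {p : k × k | p.1 ^ 12 = 1 ∧ p.2 ^ 12 = 1 ∧
        TwoOfFive (p.1 ∈ ({1, ζ ^ 8} : Set k))
          (p.1 ^ 2 * p.2 ∈ ({-1, ζ ^ 10} : Set k))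
          (p.1 ^ 3 * p.2 ^ 2 = -1)
          (p.1 * p.2 ∈ ({ζ, ζ ^ 4, ζ ^ 7} : Set k))
          (p.2 = 1)} =
      ({(1, ζ), (1, ζ ^ 4), (1, ζ ^ 7), (1, ζ ^ 3), (1, ζ ^ 9), (1, -1), (1, ζ ^ 10),
        (ζ ^ 8, ζ ^ 5), (ζ ^ 8, ζ ^ 8), (ζ ^ 8, ζ ^ 11), (ζ ^ 8, ζ ^ 3), (ζ ^ 8, ζ ^ 9),
        (ζ ^ 8, ζ ^ 2), (ζ ^ 8, -1), (ζ ^ 11, ζ ^ 8), (ζ ^ 5, ζ ^ 8), (ζ ^ 4, ζ ^ 9),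
        (ζ ^ 9, ζ ^ 4), (-1, -1), (ζ ^ 2, ζ ^ 2), (-1, ζ ^ 10), (ζ ^ 10, -1),
        (ζ ^ 2, -1), (ζ ^ 4, ζ ^ 3), (ζ ^ 3, ζ ^ 4)} : Set (k × k)) ∪
        {p : k × k | ∃ j < 12, p = (ζ ^ j, 1)} ∧
    Set.ncard ({p : k × k | p.1 ^ 12 = 1 ∧ p.2 ^ 12 = 1 ∧
        TwoOfFive (p.1 ∈ ({1, ζ ^ 8} : Set k))
          (p.1 ^ 2 * p.2 ∈ ({-1, ζ ^ 10} : Set k))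
          (p.1 ^ 3 * p.2 ^ 2 = -1)
          (p.1 * p.2 ∈ ({ζ, ζ ^ 4, ζ ^ 7} : Set k))
          (p.2 = 1)}) = 37 := by
  have h12 : ζ ^ 12 = 1 := hζ.pow_eq_one
  have h6 : ζ ^ 6 = -1 :=
    (hζ.pow (by norm_num) (by norm_num : 12 = 6 * 2)).eq_neg_one_of_two_right
  have hred : ∀ x : ℕ, ζ ^ x = ζ ^ (x % 12) := by
    intro x
    conv_lhs => rw [← Nat.div_add_mod x 12]
    rw [pow_add, pow_mul, h12, one_pow, one_mul]
  have hkey : ∀ x y : ℕ, ζ ^ x = ζ ^ y ↔ ((x : ZMod 12) = (y : ZMod 12)) := by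
    intro x y
    rw [ZMod.natCast_eq_natCast_iff', hred x, hred y]
    exact ⟨fun h => hζ.pow_inj (Nat.mod_lt x (by norm_num)) (Nat.mod_lt y (by norm_num)) h,
      fun h => by rw [h]⟩
  have hkey1 : ∀ x : ℕ, (ζ ^ x = ζ) ↔ ((x : ZMod 12) = ((1 : ℕ) : ZMod 12)) := by
    intro x
    have h := hkey x 1
    rw [pow_one] at h
    exact h
  have hpow12 : ∀ a : ℕ, (ζ ^ a) ^ 12 = 1 := by
    intro a; rw [← pow_mul, mul_comm, pow_mul, h12, one_pow]
  have hmemN : ∀ a b : ℕ, ((ζ ^ a, ζ ^ b) ∈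
      {p : k × k | p.1 ^ 12 = 1 ∧ p.2 ^ 12 = 1 ∧
        TwoOfFive (p.1 ∈ ({1, ζ ^ 8} : Set k))
          (p.1 ^ 2 * p.2 ∈ ({-1, ζ ^ 10} : Set k))
          (p.1 ^ 3 * p.2 ^ 2 = -1)
          (p.1 * p.2 ∈ ({ζ, ζ ^ 4, ζ ^ 7} : Set k))
          (p.2 = 1)}) ↔ Q12 (a : ZMod 12) (b : ZMod 12) := by
    intro a b
    simp only [Set.mem_setOf_eq, hpow12, true_and]
    unfold Q12
    refine twoOfFive_congr ?_ ?_ ?_ ?_ ?_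
    · simp only [Set.mem_insert_iff, Set.mem_singleton_iff]
      rw [show (1 : k) = ζ ^ 0 by simp, hkey a 0, hkey a 8]
      push_cast
      rfl
    · simp only [Set.mem_insert_iff, Set.mem_singleton_iff]
      rw [← h6, show (ζ ^ a) ^ 2 * ζ ^ b = ζ ^ (2 * a + b) by
        rw [← pow_mul, ← pow_add]; ring_nf,
        hkey (2 * a + b) 6, hkey (2 * a + b) 10]
      push_cast
      rfl
    · rw [← h6, show (ζ ^ a) ^ 3 * (ζ ^ b) ^ 2 = ζ ^ (3 * a + 2 * b) by
        rw [← pow_mul, ← pow_mul, ← pow_add]; ring_nf,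
        hkey (3 * a + 2 * b) 6]
      push_cast
      rfl
    · simp only [Set.mem_insert_iff, Set.mem_singleton_iff]
      rw [show ζ ^ a * ζ ^ b = ζ ^ (a + b) by rw [← pow_add]]
      rw [hkey1 (a + b), hkey (a + b) 4, hkey (a + b) 7]
      push_cast
      rfl
    · rw [show (1 : k) = ζ ^ 0 by simp, hkey b 0]
      push_cast
      rfl
  have hvv : ∀ i : ZMod 12, ((i.val : ZMod 12)) = i := by
    intro i; simp [ZMod.natCast_val, ZMod.cast_id]
  have hiff : ∀ i j : ZMod 12, Q12 i j ↔ (i, j) ∈ ([(0, 0), (0, 1), (0, 3), (0, 4), (0, 6), (0, 7), (0, 9), (0, 10), (1, 0), (2, 0), (2, 2), (2, 6), (3, 0), (3, 4), (4, 0), (4, 3), (4, 9), (5, 0), (5, 8), (6, 0), (6, 6), (6, 10), (7, 0), (8, 0), (8, 2), (8, 3), (8, 5), (8, 6), (8, 8), (8, 9), (8, 11), (9, 0), (9, 4), (10, 0), (10, 6), (11, 0), (11, 8)] : List (ZMod 12 × ZMod 12)) := by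
    decide
  have v0 : ((0 : ZMod 12)).val = 0 := rfl
  have v1 : ((1 : ZMod 12)).val = 1 := rfl
  have v2 : ((2 : ZMod 12)).val = 2 := rfl
  have v3 : ((3 : ZMod 12)).val = 3 := rfl
  have v4 : ((4 : ZMod 12)).val = 4 := rfl
  have v5 : ((5 : ZMod 12)).val = 5 := rfl
  have v6 : ((6 : ZMod 12)).val = 6 := rfl
  have v7 : ((7 : ZMod 12)).val = 7 := rfl
  have v8 : ((8 : ZMod 12)).val = 8 := rfl
  have v9 : ((9 : ZMod 12)).val = 9 := rfl
  have v10 : ((10 : ZMod 12)).val = 10 := rfl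
  have v11 : ((11 : ZMod 12)).val = 11 := rfl
  constructor
  · ext p
    constructor
    · rintro hp
      obtain ⟨a, ha, ha'⟩ := hζ.eq_pow_of_pow_eq_one hp.1
      obtain ⟨b, hb, hb'⟩ := hζ.eq_pow_of_pow_eq_one hp.2.1
      have hp' : p = (ζ ^ a, ζ ^ b) := by
        rw [ha', hb']
      rw [hp'] at hp
      have hq : Q12 (a : ZMod 12) (b : ZMod 12) := (hmemN a b).mp hp
      rw [hiff] at hq
      rw [hp']
      have hav : a = ((a : ZMod 12)).val := (ZMod.val_cast_of_lt ha).symm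
      have hbv : b = ((b : ZMod 12)).val := (ZMod.val_cast_of_lt hb).symm
      rw [hav, hbv]
      generalize (a : ZMod 12) = i at hq ⊢
      generalize (b : ZMod 12) = j at hq ⊢
      simp only [List.mem_cons, List.not_mem_nil, or_false, Prod.mk.injEq] at hq
      obtain ⟨rfl, rfl⟩ | ⟨rfl, rfl⟩ | ⟨rfl, rfl⟩ | ⟨rfl, rfl⟩ | ⟨rfl, rfl⟩ | ⟨rfl, rfl⟩ | ⟨rfl, rfl⟩ | ⟨rfl, rfl⟩ | ⟨rfl, rfl⟩ | ⟨rfl, rfl⟩ | ⟨rfl, rfl⟩ | ⟨rfl, rfl⟩ | ⟨rfl, rfl⟩ | ⟨rfl, rfl⟩ | ⟨rfl, rfl⟩ | ⟨rfl, rfl⟩ | ⟨rfl, rfl⟩ | ⟨rfl, rfl⟩ | ⟨rfl, rfl⟩ | ⟨rfl, rfl⟩ | ⟨rfl, rfl⟩ | ⟨rfl, rfl⟩ | ⟨rfl, rfl⟩ | ⟨rfl, rfl⟩ | ⟨rfl, rfl⟩ | ⟨rfl, rfl⟩ | ⟨rfl, rfl⟩ | ⟨rfl, rfl⟩ | ⟨rfl,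 rfl⟩ | ⟨rfl, rfl⟩ | ⟨rfl, rfl⟩ | ⟨rfl, rfl⟩ | ⟨rfl, rfl⟩ | ⟨rfl, rfl⟩ | ⟨rfl, rfl⟩ | ⟨rfl, rfl⟩ | ⟨rfl, rfl⟩ := hq
      all_goals simp only [v0, v1, v2, v3, v4, v5, v6, v7, v8, v9, v10, v11]
      · exact Set.mem_union_right _ ⟨0, by norm_num, by rw [pow_zero]⟩
      · exact Set.mem_union_left _ (by simp only [Set.mem_insert_iff, Set.mem_singleton_iff, Prod.mk.injEq, pow_zero, pow_one, h6, and_self, eq_self_iff_true, true_and, true_or, or_true])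
      · exact Set.mem_union_left _ (by simp only [Set.mem_insert_iff, Set.mem_singleton_iff, Prod.mk.injEq, pow_zero, pow_one, h6, and_self, eq_self_iff_true, true_and, true_or, or_true])
      · exact Set.mem_union_left _ (by simp only [Set.mem_insert_iff, Set.mem_singleton_iff, Prod.mk.injEq, pow_zero, pow_one, h6, and_self, eq_self_iff_true, true_and, true_or, or_true])
      · exact Set.mem_union_left _ (by simp only [Set.mem_insert_iff, Set.mem_singleton_iff, Prod.mk.injEq, pow_zero, pow_one, h6, and_self, eq_self_iff_true, true_and, true_or, or_true])
      · exact Set.mem_union_left _ (by simp only [Set.mem_insert_iff, Set.mem_singleton_iff, Prod.mk.injEq, pow_zero, pow_one, h6, and_self, eq_self_iff_true, true_and, true_or, or_true])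
      · exact Set.mem_union_left _ (by simp only [Set.mem_insert_iff, Set.mem_singleton_iff, Prod.mk.injEq, pow_zero, pow_one, h6, and_self, eq_self_iff_true, true_and, true_or, or_true])
      · exact Set.mem_union_left _ (by simp only [Set.mem_insert_iff, Set.mem_singleton_iff, Prod.mk.injEq, pow_zero, pow_one, h6, and_self, eq_self_iff_true, true_and, true_or, or_true])
      · exact Set.mem_union_right _ ⟨1, by norm_num, by rw [pow_zero]⟩
      · exact Set.mem_union_right _ ⟨2, by norm_num, by rw [pow_zero]⟩
      · exact Set.mem_union_left _ (by simp only [Set.mem_insert_iff, Set.mem_singleton_iff, Prod.mk.injEq, pow_zero, pow_one, h6, and_self, eq_self_iff_true, true_and, true_or, or_true])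
      · exact Set.mem_union_left _ (by simp only [Set.mem_insert_iff, Set.mem_singleton_iff, Prod.mk.injEq, pow_zero, pow_one, h6, and_self, eq_self_iff_true, true_and, true_or, or_true])
      · exact Set.mem_union_right _ ⟨3, by norm_num, by rw [pow_zero]⟩
      · exact Set.mem_union_left _ (by simp only [Set.mem_insert_iff, Set.mem_singleton_iff, Prod.mk.injEq, pow_zero, pow_one, h6, and_self, eq_self_iff_true, true_and, true_or, or_true])
      · exact Set.mem_union_right _ ⟨4, by norm_num, by rw [pow_zero]⟩
      · exact Set.mem_union_left _ (by simp only [Set.mem_insert_iff, Set.mem_singleton_iff, Prod.mk.injEq, pow_zero, pow_one, h6, and_self, eq_self_iff_true, true_and, true_or, or_true])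
      · exact Set.mem_union_left _ (by simp only [Set.mem_insert_iff, Set.mem_singleton_iff, Prod.mk.injEq, pow_zero, pow_one, h6, and_self, eq_self_iff_true, true_and, true_or, or_true])
      · exact Set.mem_union_right _ ⟨5, by norm_num, by rw [pow_zero]⟩
      · exact Set.mem_union_left _ (by simp only [Set.mem_insert_iff, Set.mem_singleton_iff, Prod.mk.injEq, pow_zero, pow_one, h6, and_self, eq_self_iff_true, true_and, true_or, or_true])
      · exact Set.mem_union_right _ ⟨6, by norm_num, by rw [pow_zero]⟩
      · exact Set.mem_union_left _ (by simp only [Set.mem_insert_iff, Set.mem_singleton_iff, Prod.mk.injEq, pow_zero, pow_one, h6, and_self, eq_self_iff_true, true_and, true_or, or_true])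
      · exact Set.mem_union_left _ (by simp only [Set.mem_insert_iff, Set.mem_singleton_iff, Prod.mk.injEq, pow_zero, pow_one, h6, and_self, eq_self_iff_true, true_and, true_or, or_true])
      · exact Set.mem_union_right _ ⟨7, by norm_num, by rw [pow_zero]⟩
      · exact Set.mem_union_right _ ⟨8, by norm_num, by rw [pow_zero]⟩
      · exact Set.mem_union_left _ (by simp only [Set.mem_insert_iff, Set.mem_singleton_iff, Prod.mk.injEq, pow_zero, pow_one, h6, and_self, eq_self_iff_true, true_and, true_or, or_true])
      · exact Set.mem_union_left _ (by simp only [Set.mem_insert_iff, Set.mem_singleton_iff, Prod.mk.injEq, pow_zero, pow_one, h6, and_self, eq_self_iff_true, true_and, true_or, or_true])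
      · exact Set.mem_union_left _ (by simp only [Set.mem_insert_iff, Set.mem_singleton_iff, Prod.mk.injEq, pow_zero, pow_one, h6, and_self, eq_self_iff_true, true_and, true_or, or_true])
      · exact Set.mem_union_left _ (by simp only [Set.mem_insert_iff, Set.mem_singleton_iff, Prod.mk.injEq, pow_zero, pow_one, h6, and_self, eq_self_iff_true, true_and, true_or, or_true])
      · exact Set.mem_union_left _ (by simp only [Set.mem_insert_iff, Set.mem_singleton_iff, Prod.mk.injEq, pow_zero, pow_one, h6, and_self, eq_self_iff_true, true_and, true_or, or_true])
      · exact Set.mem_union_left _ (by simp only [Set.mem_insert_iff, Set.mem_singleton_iff, Prod.mk.injEq, pow_zero, pow_one, h6, and_self, eq_self_iff_true, true_and, true_or, or_true])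
      · exact Set.mem_union_left _ (by simp only [Set.mem_insert_iff, Set.mem_singleton_iff, Prod.mk.injEq, pow_zero, pow_one, h6, and_self, eq_self_iff_true, true_and, true_or, or_true])
      · exact Set.mem_union_right _ ⟨9, by norm_num, by rw [pow_zero]⟩
      · exact Set.mem_union_left _ (by simp only [Set.mem_insert_iff, Set.mem_singleton_iff, Prod.mk.injEq, pow_zero, pow_one, h6, and_self, eq_self_iff_true, true_and, true_or, or_true])
      · exact Set.mem_union_right _ ⟨10, by norm_num, by rw [pow_zero]⟩
      · exact Set.mem_union_left _ (by simp only [Set.mem_insert_iff, Set.mem_singleton_iff, Prod.mk.injEq, pow_zero, pow_one, h6, and_self, eq_self_iff_true, true_and, true_or, or_true])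
      · exact Set.mem_union_right _ ⟨11, by norm_num, by rw [pow_zero]⟩
      · exact Set.mem_union_left _ (by simp only [Set.mem_insert_iff, Set.mem_singleton_iff, Prod.mk.injEq, pow_zero, pow_one, h6, and_self, eq_self_iff_true, true_and, true_or, or_true])
    · rintro (hp | hp)
      · simp only [Set.mem_insert_iff, Set.mem_singleton_iff] at hp
        rcases hp with rfl|rfl|rfl|rfl|rfl|rfl|rfl|rfl|rfl|rfl|rfl|rfl|rfl|rfl|rfl|rfl|rfl|rfl|rfl|rfl|rfl|rfl|rfl|rfl|rfl
        · simpa [h6] using (hmemN 0 1).mpr (by decide)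
        · simpa [h6] using (hmemN 0 4).mpr (by decide)
        · simpa [h6] using (hmemN 0 7).mpr (by decide)
        · simpa [h6] using (hmemN 0 3).mpr (by decide)
        · simpa [h6] using (hmemN 0 9).mpr (by decide)
        · simpa [h6] using (hmemN 0 6).mpr (by decide)
        · simpa [h6] using (hmemN 0 10).mpr (by decide)
        · simpa [h6] using (hmemN 8 5).mpr (by decide)
        · simpa [h6] using (hmemN 8 8).mpr (by decide)
        · simpa [h6] using (hmemN 8 11).mpr (by decide)
        · simpa [h6] using (hmemN 8 3).mpr (by decide)
        · simpa [h6] using (hmemN 8 9).mpr (by decide)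
        · simpa [h6] using (hmemN 8 2).mpr (by decide)
        · simpa [h6] using (hmemN 8 6).mpr (by decide)
        · simpa [h6] using (hmemN 11 8).mpr (by decide)
        · simpa [h6] using (hmemN 5 8).mpr (by decide)
        · simpa [h6] using (hmemN 4 9).mpr (by decide)
        · simpa [h6] using (hmemN 9 4).mpr (by decide)
        · simpa [h6] using (hmemN 6 6).mpr (by decide)
        · simpa [h6] using (hmemN 2 2).mpr (by decide)
        · simpa [h6] using (hmemN 6 10).mpr (by decide)
        · simpa [h6] using (hmemN 10 6).mpr (by decide)
        · simpa [h6] using (hmemN 2 6).mpr (by decide)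
        · simpa [h6] using (hmemN 4 3).mpr (by decide)
        · simpa [h6] using (hmemN 3 4).mpr (by decide)
      · obtain ⟨j, hj, rfl⟩ := hp
        simpa using (hmemN j 0).mpr (by
          have hall : ∀ i : ZMod 12, Q12 i 0 := by decide
          simpa using hall (j : ZMod 12))
  · have himg :
        {p : k × k | p.1 ^ 12 = 1 ∧ p.2 ^ 12 = 1 ∧
          TwoOfFive (p.1 ∈ ({1, ζ ^ 8} : Set k))
            (p.1 ^ 2 * p.2 ∈ ({-1, ζ ^ 10} : Set k))
            (p.1 ^ 3 * p.2 ^ 2 = -1)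
            (p.1 * p.2 ∈ ({ζ, ζ ^ 4, ζ ^ 7} : Set k))
            (p.2 = 1)} =
          (fun q : ZMod 12 × ZMod 12 => ((ζ ^ q.1.val, ζ ^ q.2.val) : k × k)) ''
            {q : ZMod 12 × ZMod 12 | Q12 q.1 q.2} := by
      ext p
      constructor
      · intro hp
        obtain ⟨a, ha, ha'⟩ := hζ.eq_pow_of_pow_eq_one hp.1
        obtain ⟨b, hb, hb'⟩ := hζ.eq_pow_of_pow_eq_one hp.2.1
        have hp' : p = (ζ ^ a, ζ ^ b) := by rw [ha', hb']
        rw [hp'] at hp ⊢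
        refine ⟨((a : ZMod 12), (b : ZMod 12)), (hmemN a b).mp hp, ?_⟩
        simp [ZMod.val_cast_of_lt ha, ZMod.val_cast_of_lt hb]
      · rintro ⟨⟨i, j⟩, hq, rfl⟩
        exact (hmemN i.val j.val).mpr (by rwa [hvv, hvv])
    rw [himg]
    rw [Set.ncard_image_of_injOn]
    · rw [show {q : ZMod 12 × ZMod 12 | Q12 q.1 q.2} =
          ↑(Finset.univ.filter fun q : ZMod 12 × ZMod 12 => Q12 q.1 q.2) by
        ext q; simp]
      rw [Set.ncard_coe_finset]
      decide
    · rintro ⟨i1, j1⟩ - ⟨i2, j2⟩ - h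
      have h1 := congrArg Prod.fst h
      have h2 := congrArg Prod.snd h
      simp only at h1 h2
      have e1 : i1.val = i2.val := hζ.pow_inj i1.val_lt i2.val_lt h1
      have e2 : j1.val = j2.val := hζ.pow_inj j1.val_lt j2.val_lt h2
      exact Prod.ext (ZMod.val_injective 12 e1) (ZMod.val_injective 12 e2)

theorem stmt_6 {k : Type*} [Field k] [IsAlgClosed k] [CharZero k]
    (ζ : k) (hζ : IsPrimitiveRoot ζ 12) :
    {p : k × k | p.1 ^ 12 = 1 ∧ p.2 ^ 12 = 1 ∧
        TwoOfFive (p.1 ∈ ({1, ζ ^ 8} : Set k))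
          (p.1 ^ 2 * p.2 ∈ ({-1, ζ ^ 10} : Set k))
          (p.1 ^ 3 * p.2 ^ 2 = -1)
          (p.1 * p.2 ∈ ({ζ, ζ ^ 4, ζ ^ 7} : Set k))
          (p.2 = 1)} =
      ({(1, ζ), (1, ζ ^ 4), (1, ζ ^ 7), (1, ζ ^ 3), (1, ζ ^ 9), (1, -1), (1, ζ ^ 10),
        (ζ ^ 8, ζ ^ 5), (ζ ^ 8, ζ ^ 8), (ζ ^ 8, ζ ^ 11), (ζ ^ 8, ζ ^ 3), (ζ ^ 8, ζ ^ 9),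
        (ζ ^ 8, ζ ^ 2), (ζ ^ 8, -1), (ζ ^ 11, ζ ^ 8), (ζ ^ 5, ζ ^ 8), (ζ ^ 4, ζ ^ 9),
        (ζ ^ 9, ζ ^ 4), (-1, -1), (ζ ^ 2, ζ ^ 2), (-1, ζ ^ 10), (ζ ^ 10, -1),
        (ζ ^ 2, -1), (ζ ^ 4, ζ ^ 3), (ζ ^ 3, ζ ^ 4)} : Set (k × k)) ∪
        {p : k × k | ∃ j < 12, p = (ζ ^ j, 1)} ∧
    Set.ncard ({p : k × k | p.1 ^ 12 = 1 ∧ p.2 ^ 12 = 1 ∧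
        TwoOfFive (p.1 ∈ ({1, ζ ^ 8} : Set k))
          (p.1 ^ 2 * p.2 ∈ ({-1, ζ ^ 10} : Set k))
          (p.1 ^ 3 * p.2 ^ 2 = -1)
          (p.1 * p.2 ∈ ({ζ, ζ ^ 4, ζ ^ 7} : Set k))
          (p.2 = 1)}) = 37 :=
  stmt6_aux ζ hζ
end

section
/- Consider the 11-dimensional vector space V with basis v_{0,0}, v_{0,1}, v_{1,1}, v_{2,1}, v_{2,2}, v_{3,2}, v_{4,2}, v_{3,3}, v_{4,3}, v_{5,3}, v_{5,4} and operators E₁, E₂, F₁, F₂ defined by Table 'caso 11' of the paper (e.g. E₂v_{0,0} = v_{0,1}, E₁v_{0,1} = v_{1,1}, F₂v_{0,1} = λ(g₂)(ζ^{11}−1)v_{0,0}, F₁v_{1,1} = λ(g₁)q₁₂(ζ−1)v_{0,1}, etc.) together with the Γ-action by weights λ·χ₁^iχ₂^j on v_{i,j}. Then V is a simple module: every nonzero subspace invariant under E₁, E₂, F₁, F₂ and the diagonal Γ-action equals V. -/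
theorem stmt_18 {k : Type*} [Field k] [IsAlgClosed k] [CharZero k]
    (ζ : k) (hζ : IsPrimitiveRoot ζ 12)
    (q12 q21 : k) (hq12 : q12 ≠ 0) (hq21 : q21 ≠ 0) (hq : q12 * q21 = ζ ^ 11)
    (lg1 lg2 : k) (hlg1 : lg1 ≠ 0) (hlg2 : lg2 ≠ 0)
    {V : Type*} [AddCommGroup V] [Module k V]
    -- basis indexed by v₀₀, v₀₁, v₁₁, v₂₁, v₂₂, v₃₂, v₄₂, v₃₃, v₄₃, v₅₃, v₅₄
    (b : Module.Basis (Fin 11) k V)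
    (E1 E2 F1 F2 D : V →ₗ[k] V)
    (hE1 : ∀ i : Fin 11, E1 (b i) =
      ![0, b 2, b 3, 0, b 5, b 6, 0, (q12 * ζ ^ 8 * (ζ ^ 3 - 1) / 2) • b 8, b 9, 0, 0] i)
    (hE2 : ∀ i : Fin 11, E2 (b i) =
      ![b 1, 0, 0, b 4, 0, b 7, b 8, 0, 0, b 10, 0] i)
    (hF1 : ∀ i : Fin 11, F1 (b i) = lg1 •
      ![0, 0, (q12 * (ζ - 1)) • b 1, (q12 * ζ ^ 8 * (1 + ζ ^ 3)) • b 2, 0,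
        (q12 ^ 2 * (ζ ^ 2 - 1)) • b 4, (2 * q12 ^ 2 * (ζ ^ 2 - 1)) • b 5, 0,
        (2 * q12 ^ 2 * (ζ ^ 2 - 1)) • b 7, (q12 ^ 3 * ζ ^ 8 * (1 - ζ ^ 11)) • b 8, 0] i)
    (hF2 : ∀ i : Fin 11, F2 (b i) = lg2 •
      ![0, (ζ ^ 11 - 1) • b 0, 0, 0, (q21 ^ 2 * (1 - ζ)) • b 3, 0, 0,
        (q21 ^ 3 * (ζ ^ 2 - 1)) • b 5, (q21 ^ 4 * (ζ ^ 3 - 1)) • b 6, 0,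
        (q21 ^ 5 * (ζ ^ 11 + 1)) • b 9] i)
    -- the diagonal `Γ`-action: the eleven weights `λχ₁ⁱχ₂ʲ` are distinct
    (c : Fin 11 → k) (hc : Function.Injective c)
    (hD : ∀ i : Fin 11, D (b i) = c i • b i) :
    ∀ W : Submodule k V,
      (∀ x ∈ W, E1 x ∈ W) → (∀ x ∈ W, E2 x ∈ W) →
      (∀ x ∈ W, F1 x ∈ W) → (∀ x ∈ W, F2 x ∈ W) →
      (∀ x ∈ W, D x ∈ W) →
      W = ⊥ ∨ W = ⊤ := by
  intro W hE1W hE2W hF1W hF2W hDW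
  by_cases hbot : W = ⊥
  · exact Or.inl hbot
  right
  -- nonzero scalars
  have hpow : ∀ n : ℕ, 0 < n → n < 12 → ζ ^ n - 1 ≠ 0 := fun n h1 h2 =>
    sub_ne_zero.mpr (hζ.pow_ne_one_of_pos_of_lt h1.ne' h2)
  have hz1 : ζ - 1 ≠ 0 := by have := hpow 1 (by norm_num) (by norm_num); rwa [pow_one] at this
  have hz2 : ζ ^ 2 - 1 ≠ 0 := hpow 2 (by norm_num) (by norm_num)
  have hz3 : ζ ^ 3 - 1 ≠ 0 := hpow 3 (by norm_num) (by norm_num)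
  have hz11 : ζ ^ 11 - 1 ≠ 0 := hpow 11 (by norm_num) (by norm_num)
  have hz1' : 1 - ζ ≠ 0 := fun h => hz1 (by linear_combination -h)
  have hz11' : 1 - ζ ^ 11 ≠ 0 := fun h => hz11 (by linear_combination -h)
  have hζ0 : ζ ≠ 0 := hζ.ne_zero (by norm_num)
  have h2 : (2 : k) ≠ 0 := two_ne_zero
  have hp3 : 1 + ζ ^ 3 ≠ 0 := by
    intro h
    have h6 : ζ ^ 6 = 1 := by
      have : ζ ^ 3 = -1 := by linear_combination h
      calc ζ ^ 6 = (ζ ^ 3) ^ 2 := by ring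
        _ = 1 := by rw [this]; ring
    have := (hζ.pow_eq_one_iff_dvd 6).mp h6; norm_num at this
  have hp11 : ζ ^ 11 + 1 ≠ 0 := by
    intro h
    have h22 : ζ ^ 22 = 1 := by
      have : ζ ^ 11 = -1 := by linear_combination h
      calc ζ ^ 22 = (ζ ^ 11) ^ 2 := by ring
        _ = 1 := by rw [this]; ring
    have := (hζ.pow_eq_one_iff_dvd 22).mp h22; norm_num at this
  have hζ8 : ζ ^ 8 ≠ 0 := pow_ne_zero _ hζ0
  -- step helpers
  have stepE : ∀ (L : V →ₗ[k] V), (∀ x ∈ W, L x ∈ W) → ∀ (i j : Fin 11) (s : k), s ≠ 0 →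
      L (b i) = s • b j → b i ∈ W → b j ∈ W := by
    intro L hL i j s hs hval hi
    have h1 : s • b j ∈ W := hval ▸ hL _ hi
    have h2 : b j = s⁻¹ • (s • b j) := by rw [smul_smul, inv_mul_cancel₀ hs, one_smul]
    rw [h2]; exact W.smul_mem _ h1
  have stepE1 : ∀ (L : V →ₗ[k] V), (∀ x ∈ W, L x ∈ W) → ∀ (i j : Fin 11),
      L (b i) = b j → b i ∈ W → b j ∈ W := by
    intro L hL i j hval hi
    exact hval ▸ hL _ hi
  -- the explicit action values
  have e0 : E2 (b 0) = b 1 := hE2 0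
  have e1 : E1 (b 1) = b 2 := hE1 1
  have e2 : E1 (b 2) = b 3 := hE1 2
  have e3 : E2 (b 3) = b 4 := hE2 3
  have e4 : E1 (b 4) = b 5 := hE1 4
  have e5 : E1 (b 5) = b 6 := hE1 5
  have e6 : E2 (b 6) = b 8 := hE2 6
  have e7 : E1 (b 7) = (q12 * ζ ^ 8 * (ζ ^ 3 - 1) / 2) • b 8 := hE1 7
  have e8 : E1 (b 8) = b 9 := hE1 8
  have e9 : E2 (b 9) = b 10 := hE2 9
  have f10 : F2 (b 10) = (lg2 * (q21 ^ 5 * (ζ ^ 11 + 1))) • b 9 := (hF2 10).trans (smul_smul _ _ _)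
  have f9 : F1 (b 9) = (lg1 * (q12 ^ 3 * ζ ^ 8 * (1 - ζ ^ 11))) • b 8 := (hF1 9).trans (smul_smul _ _ _)
  have f8a : F2 (b 8) = (lg2 * (q21 ^ 4 * (ζ ^ 3 - 1))) • b 6 := (hF2 8).trans (smul_smul _ _ _)
  have f8b : F1 (b 8) = (lg1 * (2 * q12 ^ 2 * (ζ ^ 2 - 1))) • b 7 := (hF1 8).trans (smul_smul _ _ _)
  have f7 : F2 (b 7) = (lg2 * (q21 ^ 3 * (ζ ^ 2 - 1))) • b 5 := (hF2 7).trans (smul_smul _ _ _)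
  have f5 : F1 (b 5) = (lg1 * (q12 ^ 2 * (ζ ^ 2 - 1))) • b 4 := (hF1 5).trans (smul_smul _ _ _)
  have f4 : F2 (b 4) = (lg2 * (q21 ^ 2 * (1 - ζ))) • b 3 := (hF2 4).trans (smul_smul _ _ _)
  have f3 : F1 (b 3) = (lg1 * (q12 * ζ ^ 8 * (1 + ζ ^ 3))) • b 2 := (hF1 3).trans (smul_smul _ _ _)
  have f2 : F1 (b 2) = (lg1 * (q12 * (ζ - 1))) • b 1 := (hF1 2).trans (smul_smul _ _ _)
  have f1 : F2 (b 1) = (lg2 * (ζ ^ 11 - 1)) • b 0 := (hF2 1).trans (smul_smul _ _ _)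
  -- chain steps
  have s01 : b 0 ∈ W → b 1 ∈ W := stepE1 E2 hE2W 0 1 e0
  have s12 : b 1 ∈ W → b 2 ∈ W := stepE1 E1 hE1W 1 2 e1
  have s23 : b 2 ∈ W → b 3 ∈ W := stepE1 E1 hE1W 2 3 e2
  have s34 : b 3 ∈ W → b 4 ∈ W := stepE1 E2 hE2W 3 4 e3
  have s45 : b 4 ∈ W → b 5 ∈ W := stepE1 E1 hE1W 4 5 e4
  have s56 : b 5 ∈ W → b 6 ∈ W := stepE1 E1 hE1W 5 6 e5
  have s68 : b 6 ∈ W → b 8 ∈ W := stepE1 E2 hE2W 6 8 e6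
  have s78 : b 7 ∈ W → b 8 ∈ W := stepE E1 hE1W 7 8 _
    (div_ne_zero (mul_ne_zero (mul_ne_zero hq12 hζ8) hz3) h2) e7
  have s89 : b 8 ∈ W → b 9 ∈ W := stepE1 E1 hE1W 8 9 e8
  have s910 : b 9 ∈ W → b 10 ∈ W := stepE1 E2 hE2W 9 10 e9
  have t109 : b 10 ∈ W → b 9 ∈ W := stepE F2 hF2W 10 9 _
    (mul_ne_zero hlg2 (mul_ne_zero (pow_ne_zero _ hq21) hp11)) f10
  have t98 : b 9 ∈ W → b 8 ∈ W := stepE F1 hF1W 9 8 _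
    (mul_ne_zero hlg1 (mul_ne_zero (mul_ne_zero (pow_ne_zero _ hq12) hζ8) hz11')) f9
  have t86 : b 8 ∈ W → b 6 ∈ W := stepE F2 hF2W 8 6 _
    (mul_ne_zero hlg2 (mul_ne_zero (pow_ne_zero _ hq21) hz3)) f8a
  have t87 : b 8 ∈ W → b 7 ∈ W := stepE F1 hF1W 8 7 _
    (mul_ne_zero hlg1 (mul_ne_zero (mul_ne_zero h2 (pow_ne_zero _ hq12)) hz2)) f8b
  have t75 : b 7 ∈ W → b 5 ∈ W := stepE F2 hF2W 7 5 _
    (mul_ne_zero hlg2 (mul_ne_zero (pow_ne_zero _ hq21) hz2)) f7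
  have t54 : b 5 ∈ W → b 4 ∈ W := stepE F1 hF1W 5 4 _
    (mul_ne_zero hlg1 (mul_ne_zero (pow_ne_zero _ hq12) hz2)) f5
  have t43 : b 4 ∈ W → b 3 ∈ W := stepE F2 hF2W 4 3 _
    (mul_ne_zero hlg2 (mul_ne_zero (pow_ne_zero _ hq21) hz1')) f4
  have t32 : b 3 ∈ W → b 2 ∈ W := stepE F1 hF1W 3 2 _
    (mul_ne_zero hlg1 (mul_ne_zero (mul_ne_zero hq12 hζ8) hp3)) f3
  have t21 : b 2 ∈ W → b 1 ∈ W := stepE F1 hF1W 2 1 _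
    (mul_ne_zero hlg1 (mul_ne_zero hq12 hz1)) f2
  have t10 : b 1 ∈ W → b 0 ∈ W := stepE F2 hF2W 1 0 _
    (mul_ne_zero hlg2 hz11) f1
  -- from any basis vector one reaches b 10
  have to10 : ∀ i : Fin 11, b i ∈ W → b 10 ∈ W := by
    intro i hi
    fin_cases i
    · exact s910 (s89 (s68 (s56 (s45 (s34 (s23 (s12 (s01 hi))))))))
    · exact s910 (s89 (s68 (s56 (s45 (s34 (s23 (s12 hi)))))))
    · exact s910 (s89 (s68 (s56 (s45 (s34 (s23 hi))))))
    · exact s910 (s89 (s68 (s56 (s45 (s34 hi)))))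
    · exact s910 (s89 (s68 (s56 (s45 hi))))
    · exact s910 (s89 (s68 (s56 hi)))
    · exact s910 (s89 (s68 hi))
    · exact s910 (s89 (s78 hi))
    · exact s910 (s89 hi)
    · exact s910 hi
    · exact hi
  -- from b 10 one reaches every basis vector
  have hall10 : b 10 ∈ W → ∀ j : Fin 11, b j ∈ W := by
    intro h10 j
    have h9 := t109 h10
    have h8 := t98 h9
    have h7 := t87 h8
    have h6 := t86 h8
    have h5 := t75 h7
    have h4 := t54 h5
    have h3 := t43 h4
    have h2' := t32 h3
    have h1 := t21 h2'
    have h0 := t10 h1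
    fin_cases j <;> assumption
  -- eigenvalue decomposition: components of members are members
  have hrep : ∀ (x : V) (i : Fin 11), b.repr (D x) i = c i * b.repr x i := by
    intro x i
    conv_lhs => rw [← b.sum_repr x]
    rw [map_sum, map_sum]
    simp only [map_smul, hD, Module.Basis.repr_self, Finsupp.coe_finset_sum, Finsupp.coe_smul,
      Finset.sum_apply, Pi.smul_apply, Finsupp.single_apply, smul_eq_mul]
    rw [Finset.sum_eq_single i]
    · simp [mul_comm]
    · intro j _ hj; simp [hj]
    · intro h; exact absurd (Finset.mem_univ i) h
  have hcomp : ∀ x ∈ W, ∀ i : Fin 11, b.repr x i ≠ 0 → b i ∈ W := by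
    have main : ∀ s : Finset (Fin 11), ∀ x ∈ W, (b.repr x).support ⊆ s →
        ∀ i : Fin 11, b.repr x i ≠ 0 → b i ∈ W := by
      intro s
      induction s using Finset.strongInduction with
      | _ s ih =>
        intro x hx hsupp i hi
        by_cases hcase : ∃ j ∈ (b.repr x).support, j ≠ i
        · obtain ⟨j, hjs, hji⟩ := hcase
          set y := D x - c j • x with hy
          have hyW : y ∈ W := W.sub_mem (hDW x hx) (W.smul_mem _ hx)
          have hyrep : ∀ m, b.repr y m = (c m - c j) * b.repr x m := by
            intro m
            rw [hy, map_sub, map_smul, Finsupp.sub_apply, Finsupp.smul_apply, hrep,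
              smul_eq_mul, sub_mul]
          have hyi : b.repr y i ≠ 0 := by
            rw [hyrep]
            exact mul_ne_zero (sub_ne_zero.mpr fun h => hji (hc h).symm) hi
          have hysupp : (b.repr y).support ⊆ s.erase j := by
            intro m hm
            rw [Finsupp.mem_support_iff, hyrep] at hm
            rcases mul_ne_zero_iff.mp hm with ⟨ha, hb⟩
            refine Finset.mem_erase.mpr ⟨?_, hsupp (Finsupp.mem_support_iff.mpr hb)⟩
            intro hmj
            exact ha (by rw [hmj]; ring)
          exact ih (s.erase j) (Finset.erase_ssubset (hsupp hjs)) y hyW hysupp i hyi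
        · push_neg at hcase
          have hx_eq : x = b.repr x i • b i := by
            conv_lhs => rw [← b.sum_repr x]
            rw [Finset.sum_eq_single i]
            · intro j _ hj
              have hz : b.repr x j = 0 := by
                by_contra h
                exact hj (hcase j (Finsupp.mem_support_iff.mpr h))
              rw [hz, zero_smul]
            · intro h; exact absurd (Finset.mem_univ i) h
          have hmem : b.repr x i • b i ∈ W := hx_eq ▸ hx
          have hbi : b i = (b.repr x i)⁻¹ • (b.repr x i • b i) := by
            rw [smul_smul, inv_mul_cancel₀ hi, one_smul]
          rw [hbi]
          exact W.smul_mem _ hmem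
    exact fun x hx => main Finset.univ x hx (Finset.subset_univ _)
  -- conclude
  obtain ⟨x, hxW, hx0⟩ := Submodule.exists_mem_ne_zero_of_ne_bot hbot
  have hrx : b.repr x ≠ 0 := fun h => hx0 (by
    have := congrArg b.repr.symm h
    simpa using this)
  obtain ⟨i, hi⟩ := Finsupp.ne_iff.mp hrx
  rw [Finsupp.coe_zero, Pi.zero_apply] at hi
  have hbi : b i ∈ W := hcomp x hxW i hi
  have hall : ∀ j : Fin 11, b j ∈ W := hall10 (to10 i hbi)
  rw [eq_top_iff, ← b.span_eq]
  rw [Submodule.span_le]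
  rintro _ ⟨j, rfl⟩
  exact hall j
end
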